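/- The LEE Bellman operator is a γ-contraction in sup-norm on bounded functions: with T̂V(x) := c(x) + (1/α)·ln(E_{x'∼P(·|x)}[exp(αγV(x'))]) for a nonnegative bounded stage-cost c and transition kernel P, one has ‖T̂V₁ − T̂V₂‖_∞ ≤ γ·‖V₁ − V₂‖_∞ for all bounded measurable V₁, V₂ and γ ∈ (0,1). -/

import Mathlib

open MeasureTheory

private lemma LEE_aux {X : Type*} [MeasurableSpace X]
    (μ : Measure X) [IsProbabilityMeasure μ] (β : ℝ) (hβ : 0 < β)
    (V W : X → ℝ) (hmV : Measurable V) (hmW : Measurable W)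
    (CV CW : ℝ) (hbV : ∀ x, |V x| ≤ CV) (hbW : ∀ x, |W x| ≤ CW)
    (M : ℝ) (h : ∀ y, V y ≤ W y + M) :
    Real.log (∫ y, Real.exp (β * V y) ∂μ) ≤
      β * M + Real.log (∫ y, Real.exp (β * W y) ∂μ) := by
  have hIV : Integrable (fun y => Real.exp (β * V y)) μ := by
    apply Integrable.mono' (integrable_const (Real.exp (β * CV)))
      ((Real.measurable_exp.comp (measurable_const.mul hmV)).aestronglyMeasurable)
    filter_upwards with y
    simp only [Function.comp_apply]
    rw [Real.norm_eq_abs, abs_of_pos (Real.exp_pos _)]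
    exact Real.exp_le_exp.mpr (mul_le_mul_of_nonneg_left
      ((abs_le.mp (hbV y)).2) hβ.le)
  have hIW : Integrable (fun y => Real.exp (β * W y)) μ := by
    apply Integrable.mono' (integrable_const (Real.exp (β * CW)))
      ((Real.measurable_exp.comp (measurable_const.mul hmW)).aestronglyMeasurable)
    filter_upwards with y
    simp only [Function.comp_apply]
    rw [Real.norm_eq_abs, abs_of_pos (Real.exp_pos _)]
    exact Real.exp_le_exp.mpr (mul_le_mul_of_nonneg_left
      ((abs_le.mp (hbW y)).2) hβ.le)
  have hposV : 0 < ∫ y, Real.exp (β * V y) ∂μ := by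
    have : (Real.exp (β * (-CV))) = ∫ _, Real.exp (β * (-CV)) ∂μ := by simp
    rw [show (0:ℝ) = 0 from rfl]
    calc (0:ℝ) < Real.exp (β * (-CV)) := Real.exp_pos _
    _ = ∫ _, Real.exp (β * (-CV)) ∂μ := this
    _ ≤ ∫ y, Real.exp (β * V y) ∂μ := by
        apply integral_mono (integrable_const _) hIV
        intro y
        exact Real.exp_le_exp.mpr (mul_le_mul_of_nonneg_left
          ((abs_le.mp (hbV y)).1) hβ.le)
  have hposW : 0 < ∫ y, Real.exp (β * W y) ∂μ := by
    calc (0:ℝ) < Real.exp (β * (-CW)) := Real.exp_pos _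
    _ = ∫ _, Real.exp (β * (-CW)) ∂μ := by simp
    _ ≤ ∫ y, Real.exp (β * W y) ∂μ := by
        apply integral_mono (integrable_const _) hIW
        intro y
        exact Real.exp_le_exp.mpr (mul_le_mul_of_nonneg_left
          ((abs_le.mp (hbW y)).1) hβ.le)
  have hle : (∫ y, Real.exp (β * V y) ∂μ) ≤
      Real.exp (β * M) * ∫ y, Real.exp (β * W y) ∂μ := by
    rw [← integral_const_mul]
    apply integral_mono hIV (hIW.const_mul _)
    intro y
    dsimp only
    rw [← Real.exp_add]
    exact Real.exp_le_exp.mpr (by nlinarith [h y])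
  calc Real.log (∫ y, Real.exp (β * V y) ∂μ)
      ≤ Real.log (Real.exp (β * M) * ∫ y, Real.exp (β * W y) ∂μ) :=
        Real.log_le_log hposV hle
    _ = β * M + Real.log (∫ y, Real.exp (β * W y) ∂μ) := by
        rw [Real.log_mul (Real.exp_ne_zero _) (ne_of_gt hposW), Real.log_exp]

/-- The LEE Bellman operator `T̂V(x) := c(x) + (1/α)·ln(E_{x'∼P(·|x)}[exp(αγV(x'))])`
is a `γ`-contraction in sup-norm on bounded measurable functions. -/
theorem LEE_bellman_operator_contraction
    {X : Type*} [MeasurableSpace X] [Nonempty X]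
    (P : X → Measure X) (hP : ∀ x, IsProbabilityMeasure (P x))
    (c : X → ℝ) (hc : ∀ x, 0 ≤ c x) (hcb : ∃ C, ∀ x, c x ≤ C) (hcm : Measurable c)
    (α γ : ℝ) (hα : 0 < α) (hγ : 0 < γ) (hγ1 : γ < 1)
    (T : (X → ℝ) → (X → ℝ))
    (hT : ∀ V x, T V x =
      c x + (1 / α) * Real.log (∫ y, Real.exp (α * γ * V y) ∂(P x)))
    (V₁ V₂ : X → ℝ) (hm₁ : Measurable V₁) (hm₂ : Measurable V₂)
    (hb₁ : ∃ C, ∀ x, |V₁ x| ≤ C) (hb₂ : ∃ C, ∀ x, |V₂ x| ≤ C) :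
    (⨆ x, |T V₁ x - T V₂ x|) ≤ γ * ⨆ x, |V₁ x - V₂ x| := by
  obtain ⟨C₁, hC₁⟩ := hb₁
  obtain ⟨C₂, hC₂⟩ := hb₂
  set M := ⨆ x, |V₁ x - V₂ x| with hMdef
  have hMb : BddAbove (Set.range fun x => |V₁ x - V₂ x|) := by
    refine ⟨C₁ + C₂, ?_⟩
    rintro _ ⟨x, rfl⟩
    calc |V₁ x - V₂ x| ≤ |V₁ x| + |V₂ x| := abs_sub _ _
      _ ≤ C₁ + C₂ := add_le_add (hC₁ x) (hC₂ x)
  have hM : ∀ x, |V₁ x - V₂ x| ≤ M := fun x => le_ciSup hMb x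
  have hβ : 0 < α * γ := mul_pos hα hγ
  apply ciSup_le
  intro x
  have := hP x
  have h12 : ∀ y, V₁ y ≤ V₂ y + M := fun y => by
    have := (abs_le.mp (hM y)).2; linarith
  have h21 : ∀ y, V₂ y ≤ V₁ y + M := fun y => by
    have := (abs_le.mp (hM y)).1; linarith
  have key₁ := LEE_aux (P x) (α * γ) hβ V₁ V₂ hm₁ hm₂ C₁ C₂ hC₁ hC₂ M h12
  have key₂ := LEE_aux (P x) (α * γ) hβ V₂ V₁ hm₂ hm₁ C₂ C₁ hC₂ hC₁ M h21
  rw [hT, hT]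
  have habs : |Real.log (∫ y, Real.exp (α * γ * V₁ y) ∂(P x)) -
      Real.log (∫ y, Real.exp (α * γ * V₂ y) ∂(P x))| ≤ α * γ * M := by
    rw [abs_sub_le_iff]
    constructor <;> linarith
  have : c x + 1 / α * Real.log (∫ y, Real.exp (α * γ * V₁ y) ∂(P x)) -
      (c x + 1 / α * Real.log (∫ y, Real.exp (α * γ * V₂ y) ∂(P x))) =
      (1 / α) * (Real.log (∫ y, Real.exp (α * γ * V₁ y) ∂(P x)) -
        Real.log (∫ y, Real.exp (α * γ * V₂ y) ∂(P x))) := by ring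
  rw [this, abs_mul, abs_of_pos (by positivity : (0:ℝ) < 1 / α)]
  calc 1 / α * |Real.log (∫ y, Real.exp (α * γ * V₁ y) ∂(P x)) -
        Real.log (∫ y, Real.exp (α * γ * V₂ y) ∂(P x))|
      ≤ 1 / α * (α * γ * M) := by
        apply mul_le_mul_of_nonneg_left habs (by positivity)
    _ = γ * M := by field_simp
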